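/- arXiv:2106.08485 — 8 statements merged into one kernel-verified Lean document; each statement's English description precedes it below -/
import Mathlib

section
/- Let p > q be coprime positive integers with Euclidean remainders r_{-1}=p, r_0=q, r_1, ..., r_{n-1}=1, and suppose θ > 1 divides both p and r_i for some 1 ≤ i ≤ n-1. Then θ divides the convergent numerator p_i of p/q = [d_1,...,d_n]. -/
/-- If `θ > 1` divides both `p` and the Euclidean remainder `rᵢ` (for some
`1 ≤ i ≤ n-1`) of the pair `(p,q)` with `p > q` coprime, then `θ` divides the
convergent numerator `pᵢ`.  Here `r (i+1)` stands for `rᵢ` (with `r₋₁ = p`,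
`r₀ = q`) and `P (i+1)` stands for `pᵢ` (with `p₋₁ = 0`, `p₀ = 1`). -/
theorem stmt3 (p q n θ : ℕ) (hq : 0 < q) (hpq : q < p) (hcop : Nat.Coprime p q)
    (r : ℕ → ℕ) (hr0 : r 0 = p) (hr1 : r 1 = q)
    (hrrec : ∀ i, r (i + 2) = r i % r (i + 1))
    (hn : r n = 1)
    (P : ℕ → ℕ)
    (hP0 : P 0 = 0) (hP1 : P 1 = 1)
    (hPrec : ∀ i, P (i + 2) = (r i / r (i + 1)) * P (i + 1) + P i)
    (hθ : 1 < θ) (hθp : θ ∣ p)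
    (i : ℕ) (hi1 : 1 ≤ i) (hin : i ≤ n - 1) (hθr : θ ∣ r (i + 1)) :
    θ ∣ P (i + 1) := by
  -- key identity: p = r(j+1)*P j + r j * P (j+1)
  have key : ∀ j, p = r (j + 1) * P j + r j * P (j + 1) := by
    intro j
    induction j with
    | zero => simp [hr0, hr1, hP0, hP1]
    | succ k ih =>
      have hmd : r k % r (k+1) + r (k+1) * (r k / r (k+1)) = r k :=
        Nat.mod_add_div _ _
      rw [hrrec k, hPrec k, ih]
      zify
      zify at hmd
      linear_combination -(P (k+1) : ℤ) * hmd
  -- consecutive remainders coprime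
  have cop : ∀ j, Nat.gcd (r j) (r (j + 1)) = 1 := by
    intro j
    induction j with
    | zero => rw [hr0, hr1]; exact hcop
    | succ k ih =>
      rw [hrrec k, Nat.gcd_comm, ← Nat.gcd_rec, Nat.gcd_comm]
      exact ih
  have h1 : θ ∣ r (i + 1) * P i + r i * P (i + 1) := key i ▸ hθp
  have h2 : θ ∣ r i * P (i + 1) :=
    (Nat.dvd_add_right (hθr.mul_right _)).mp h1
  have hcopθ : Nat.Coprime θ (r i) :=
    ((Nat.Coprime.coprime_dvd_right hθr (cop i))).symm
  exact hcopθ.dvd_of_dvd_mul_left h2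
end

section
/- If θ is a perfect-square-root order, i.e., p = θ² for some positive integer θ > 1, and q is coprime to p, then θ does not divide any remainder of the Euclidean algorithm applied to (p,q). (Consequently a simple knot of order θ in a lens space of order θ² fibers.) -/
/-- If `p = θ²` for some integer `θ > 1` and `q` is coprime to `p` with
`0 < q < p`, then `θ` does not divide any (positive) remainder of the
Euclidean algorithm applied to `(p,q)`.  Here `r (i+1)` stands for `rᵢ`
(with `r₋₁ = p`, `r₀ = q`), and the genuine remainders are the positive
`rᵢ` with `i ≥ 1`. -/
theorem stmt5 (p q θ : ℕ) (hθ : 1 < θ) (hp : p = θ ^ 2)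
    (hq : 0 < q) (hqp : q < p) (hcop : Nat.Coprime p q)
    (r : ℕ → ℕ) (hr0 : r 0 = p) (hr1 : r 1 = q)
    (hrrec : ∀ i, r (i + 2) = r i % r (i + 1)) :
    ∀ i : ℕ, 1 ≤ i → 0 < r (i + 1) → ¬ θ ∣ r (i + 1) := by
  have hgcd : ∀ i, Nat.gcd (r (i + 1)) (r i) = 1 := by
    intro i
    induction i with
    | zero => rw [hr0, hr1, Nat.gcd_comm]; exact hcop
    | succ n ih => rw [hrrec n, ← Nat.gcd_rec]; exact ih
  have hcomb : ∀ j, ∃ u v, 1 ≤ u ∧ 1 ≤ v ∧ p = u * r (j + 1) + v * r (j + 2) := by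
    intro j
    induction j with
    | zero =>
      refine ⟨p / q, 1, (Nat.one_le_div_iff hq).mpr (le_of_lt hqp), le_refl 1, ?_⟩
      rw [hr1, hrrec 0, hr0, hr1, one_mul, Nat.mul_comm]
      exact (Nat.div_add_mod p q).symm
    | succ n ih =>
      obtain ⟨u, v, hu, hv, hpe⟩ := ih
      refine ⟨u * (r (n + 1) / r (n + 2)) + v, u, by omega, hu, ?_⟩
      rw [hrrec (n + 1)]
      calc p = u * r (n + 1) + v * r (n + 2) := hpe
        _ = u * (r (n + 2) * (r (n + 1) / r (n + 2)) + r (n + 1) % r (n + 2))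
              + v * r (n + 2) := by rw [Nat.div_add_mod]
        _ = (u * (r (n + 1) / r (n + 2)) + v) * r (n + 2)
              + u * (r (n + 1) % r (n + 2)) := by ring
  intro i hi hpos hdvd
  obtain ⟨i', rfl⟩ : ∃ i', i = i' + 1 := ⟨i - 1, by omega⟩
  have hg := hgcd (i' + 1)
  have hθle : θ ≤ r (i' + 2) := Nat.le_of_dvd hpos hdvd
  by_cases hri : r (i' + 1) = 0
  · rw [hri, Nat.gcd_zero_right] at hg
    have hg2 : r (i' + 2) = 1 := hg
    omega
  · have hlt : r (i' + 2) < r (i' + 1) := by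
      rw [hrrec i']; exact Nat.mod_lt _ (Nat.pos_of_ne_zero hri)
    obtain ⟨u, v, hu, hv, hpe⟩ := hcomb i'
    have hcopθ : Nat.Coprime θ (r (i' + 1)) :=
      Nat.Coprime.coprime_dvd_left hdvd hg
    have hθp : θ ∣ p := ⟨θ, by rw [hp]; ring⟩
    have h1 : θ ∣ u * r (i' + 1) + v * r (i' + 2) := hpe ▸ hθp
    have h2 : θ ∣ v * r (i' + 2) := Dvd.dvd.mul_left hdvd v
    have h3 := Nat.dvd_sub h1 h2
    rw [Nat.add_sub_cancel] at h3
    have hθu : θ ∣ u := hcopθ.dvd_of_dvd_mul_right h3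
    have hθu' : θ ≤ u := Nat.le_of_dvd (by omega) hθu
    have hA : θ * (θ + 1) ≤ u * r (i' + 1) := Nat.mul_le_mul hθu' (by omega)
    have hB : 1 * θ ≤ v * r (i' + 2) := Nat.mul_le_mul hv hθle
    nlinarith [hpe, hp]
end

section
/- Let p be a positive integer, q coprime to p with 0 < q < p, and 0 < k < p. Let q' be the inverse of q mod p, l = [q'k]_p the least positive residue, θ = p/gcd(p,k), t = lθ/p. Then 0 < t < θ and gcd(t,θ) = 1. -/
/-- Least positive residue of `a` modulo `p` (for `a ≥ 1`, `p ≥ 1`). -/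
def lprN (a p : ℕ) : ℕ := (a - 1) % p + 1

/-- With `q'` the inverse of `q` mod `p`, `l = [q'k]_p`, `θ = p / gcd(p,k)`,
and `t = lθ/p`, the number `t` is a positive integer with `t < θ` and
`gcd(t,θ) = 1`. -/
theorem stmt6 (p q k q' : ℕ)
    (hq : 0 < q) (hqp : q < p) (hcop : Nat.Coprime p q)
    (hk : 0 < k) (hkp : k < p)
    (hq'pos : 0 < q') (hq'lt : q' < p) (hq'inv : (q' * q) % p = 1 % p)
    (l θ : ℕ) (hl : l = lprN (q' * k) p) (hθ : θ = p / Nat.gcd p k) :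
    p ∣ l * θ ∧ 0 < l * θ / p ∧ l * θ / p < θ ∧ Nat.Coprime (l * θ / p) θ := by
  have hp : 0 < p := lt_trans hq hqp
  set d := Nat.gcd p k with hd
  have hdpos : 0 < d := Nat.gcd_pos_of_pos_left _ hp
  -- p and q' are coprime
  have hcopq' : Nat.Coprime p q' := by
    have h1 : (1 : ℕ) % p = 1 := Nat.mod_eq_of_lt (by omega)
    rw [h1] at hq'inv
    have hqq : 1 ≤ q' * q := Nat.mul_pos hq'pos hq
    have hdvd : p ∣ q' * q - 1 := by
      refine ⟨q' * q / p, ?_⟩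
      have := Nat.div_add_mod (q' * q) p
      omega
    have ha : Nat.gcd p q' ∣ q' * q := Dvd.dvd.mul_right (Nat.gcd_dvd_right _ _) q
    have hb : Nat.gcd p q' ∣ q' * q - 1 := (Nat.gcd_dvd_left p q').trans hdvd
    have hc : Nat.gcd p q' ∣ q' * q - (q' * q - 1) := Nat.dvd_sub ha hb
    have he : q' * q - (q' * q - 1) = 1 := by omega
    rw [he] at hc
    exact Nat.dvd_one.mp hc
  -- p does not divide q' * k
  have hpk : ¬ p ∣ k := fun h => absurd (Nat.le_of_dvd hk h) (not_le.mpr hkp)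
  have hpq'k : ¬ p ∣ q' * k := by
    intro h
    exact hpk (hcopq'.dvd_of_dvd_mul_left h)
  have hmod : (q' * k) % p ≠ 0 := fun h => hpq'k (Nat.dvd_of_mod_eq_zero h)
  -- l equals the remainder
  have hlval : l = (q' * k) % p := by
    obtain ⟨c, r, hr, hr1, heq⟩ : ∃ c r, r < p ∧ 1 ≤ r ∧ q' * k = p * c + r :=
      ⟨(q' * k) / p, (q' * k) % p, Nat.mod_lt _ hp,
        Nat.one_le_iff_ne_zero.mpr hmod, (Nat.div_add_mod _ _).symm⟩
    rw [hl]
    unfold lprN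
    rw [heq]
    have h2 : p * c + r - 1 = p * c + (r - 1) := by omega
    rw [h2, Nat.mul_add_mod, Nat.mod_eq_of_lt (by omega : r - 1 < p),
      Nat.mul_add_mod, Nat.mod_eq_of_lt hr]
    omega
  have hlpos : 0 < l := by rw [hl]; unfold lprN; omega
  have hlp : l < p := by rw [hlval]; exact Nat.mod_lt _ hp
  -- gcd l p = d
  have hgl : Nat.gcd l p = d := by
    rw [hlval, ← Nat.gcd_rec, hcopq'.symm.gcd_mul_left_cancel_right, hd]
  have hdl : d ∣ l := hgl ▸ Nat.gcd_dvd_left l p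
  have hdp : d ∣ p := Nat.gcd_dvd_left p k
  obtain ⟨m, hm⟩ := hdl
  have hpθ : p = d * θ := by
    rw [hθ]
    exact (Nat.mul_div_cancel' hdp).symm
  have hmul : l * θ = m * p := by
    rw [hm, hpθ]; ring
  have hdvdp : p ∣ l * θ := ⟨m, by rw [hmul, mul_comm]⟩
  have hdiv : l * θ / p = m := by
    rw [hmul, Nat.mul_div_cancel _ hp]
  have hθpos : 0 < θ := by
    rcases Nat.eq_zero_or_pos θ with h | h
    · rw [h, mul_zero] at hpθ; omega
    · exact h
  have hmpos : 0 < m := by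
    rcases Nat.eq_zero_or_pos m with h | h
    · rw [h, mul_zero] at hm; omega
    · exact h
  have hmθ : m < θ := by
    have : d * m < d * θ := by rw [← hm, ← hpθ]; exact hlp
    exact lt_of_mul_lt_mul_left this (Nat.zero_le d)
  have hcopmθ : Nat.Coprime m θ := by
    have h1 : Nat.gcd (d * m) (d * θ) = d := by rw [← hm, ← hpθ]; exact hgl
    rw [Nat.gcd_mul_left] at h1
    have : d * Nat.gcd m θ = d * 1 := by rw [mul_one]; exact h1
    exact Nat.eq_of_mul_eq_mul_left hdpos this
  rw [hdiv]
  exact ⟨hdvdp, hmpos, hmθ, hcopmθ⟩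
end

section
/- Let I = [s, s+p) be an interval of integers and S an affine progression in I of positive difference q (0 < q < p, gcd(p,q)=1) with break point b. If x and x+q both lie in I and x ≠ s and x ≠ b, then x ∈ S if and only if x+q ∈ S. -/
/-- Least positive residue of `a` modulo `w` (taking values in `1, …, w` for `w > 0`). -/
def lpr (a w : ℤ) : ℤ := (a - 1) % w + 1

lemma lpr_bounds {a p : ℤ} (hp : 0 < p) : 1 ≤ lpr a p ∧ lpr a p ≤ p := by
  unfold lpr
  have h1 := Int.emod_nonneg (a - 1) (by omega : p ≠ 0)
  have h2 := Int.emod_lt_of_pos (a - 1) hp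
  omega

lemma lpr_dvd_sub (a p : ℤ) : p ∣ a - lpr a p := by
  unfold lpr
  have := Int.emod_emod_of_dvd (a - 1) (dvd_refl p)
  have h := Int.mul_ediv_add_emod (a - 1) p
  exact ⟨(a - 1) / p, by omega⟩

lemma cong_eq {p a b : ℤ} (hp : 0 < p) (h : p ∣ a - b) (h1 : -p < a - b) (h2 : a - b < p) :
    a = b := by
  rcases h with ⟨k, hk⟩
  have hk1 : k < 1 := by nlinarith
  have hk2 : -1 < k := by nlinarith
  have : k = 0 := by omega
  subst this; omega

/-- Periodicity of an affine progression of positive difference `q`: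
if `x, x+q ∈ I = [s, s+p)` and `x ≠ s`, `x ≠ b` (the break point), then
`x ∈ S ↔ x + q ∈ S`. -/
theorem stmt9 (s p q l b : ℤ) (S : Set ℤ)
    (hq : 0 < q) (hqp : q < p) (hcop : IsCoprime p q)
    (hl0 : 0 ≤ l) (hl : l < p)
    (hSsub : S ⊆ Set.Ico s (s + p))
    (hS : S \ {s} = {x : ℤ | ∃ j : ℤ, 1 ≤ j ∧ j ≤ l ∧ x = s + lpr (j * q) p})
    (hb : b = if l = 0 then s else s + lpr (l * q) p) :
    ∀ x : ℤ, s ≤ x → x + q < s + p → x ≠ s → x ≠ b → (x ∈ S ↔ x + q ∈ S) := by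
  have hp : 0 < p := by omega
  intro x hx hxq hxs hxb
  constructor
  · intro hxS
    have hx' : x ∈ S \ {s} := ⟨hxS, hxs⟩
    rw [hS] at hx'
    obtain ⟨j, hj1, hjl, hxe⟩ := hx'
    have hl0' : l ≠ 0 := by omega
    rw [if_neg hl0'] at hb
    have hjne : j ≠ l := by
      intro h; subst h; exact hxb (by rw [hxe, hb])
    have hu := lpr_bounds (a := j * q) hp
    have hv := lpr_bounds (a := (j + 1) * q) hp
    have hdu := lpr_dvd_sub (j * q) p
    have hdv := lpr_dvd_sub ((j + 1) * q) p
    have hkey : lpr (j * q) p + q = lpr ((j + 1) * q) p := by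
      apply cong_eq hp
      · obtain ⟨k1, h1⟩ := hdu; obtain ⟨k2, h2⟩ := hdv
        exact ⟨k2 - k1, by linear_combination h2 - h1⟩
      · omega
      · omega
    have : x + q ∈ S \ {s} := by
      rw [hS]
      exact ⟨j + 1, by omega, by omega, by omega⟩
    exact this.1
  · intro hxqS
    have hx' : x + q ∈ S \ {s} := ⟨hxqS, by simp only [Set.mem_singleton_iff]; omega⟩
    rw [hS] at hx'
    obtain ⟨j, hj1, hjl, hxe⟩ := hx'
    have hu := lpr_bounds (a := j * q) hp
    have hv := lpr_bounds (a := (j - 1) * q) hp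
    have hdu := lpr_dvd_sub (j * q) p
    have hdv := lpr_dvd_sub ((j - 1) * q) p
    have hj2 : 2 ≤ j := by
      rcases lt_or_ge j 2 with h | h
      · exfalso
        have hj1' : j = 1 := by omega
        subst hj1'
        have hd := lpr_dvd_sub (1 * q) p
        simp only [one_mul] at hd hxe
        have hu' := lpr_bounds (a := q) hp
        have : q = lpr q p := cong_eq hp hd (by omega) (by omega)
        omega
      · exact h
    have hkey : lpr (j * q) p - q = lpr ((j - 1) * q) p := by
      apply cong_eq hp
      · obtain ⟨k1, h1⟩ := hdu; obtain ⟨k2, h2⟩ := hdv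
        exact ⟨k2 - k1, by linear_combination h2 - h1⟩
      · have : s < x := lt_of_le_of_ne hx (Ne.symm hxs)
        omega
      · omega
    have hmem : x ∈ S \ {s} := by
      rw [hS]
      exact ⟨j - 1, by omega, by omega, by omega⟩
    exact hmem.1
end

section
/- Let S be an affine progression in I = [s, s+p) with difference q > 0 and break point b. Then there exists an integer c such that for every x with x, x+q ∈ I: the number of elements of S in the half-open interval (x, x+q] equals c if x < b, and equals c - 1 if x ≥ b. -/
private lemma ediv1 {p r : ℤ} (k : ℤ) (hp : 0 < p) (h1 : 0 ≤ r) (h2 : r < p) :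
    (p * k + r) / p = k := by
  have hm : p * k + r = r + k * p := by ring
  rw [hm, Int.add_mul_ediv_right _ _ (by omega : p ≠ 0),
    Int.ediv_eq_zero_of_lt h1 h2, zero_add]

private lemma ediv2 {p r : ℤ} (k : ℤ) (hp : 0 < p) (h1 : -p ≤ r) (h2 : r < 0) :
    (p * k + r) / p = k - 1 := by
  have hm : p * k + r = p * (k - 1) + (r + p) := by ring
  rw [hm, ediv1 (k - 1) hp (by omega) (by omega)]

private lemma tele (g : ℤ → ℤ) : ∀ n : ℕ,
    ∑ j ∈ Finset.Icc (1 : ℤ) (n : ℤ), (g j - g (j - 1)) = g n - g 0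
  | 0 => by simp
  | (n + 1) => by
    have hins : Finset.Icc (1 : ℤ) ((n : ℤ) + 1)
        = insert ((n : ℤ) + 1) (Finset.Icc (1 : ℤ) (n : ℤ)) := by
      ext k; simp only [Finset.mem_Icc, Finset.mem_insert]; omega
    push_cast
    rw [hins, Finset.sum_insert (by simp only [Finset.mem_Icc]; omega), tele g n]
    have h1 : ((n : ℤ) + 1) - 1 = (n : ℤ) := by ring
    rw [h1]; ring

/-- For an affine progression `S` in `I = [s, s+p)` of positive difference `q`
and break point `b`, there is an integer `c` such that for `x, x+q ∈ I`,
`|S ∩ (x, x+q]| = c` if `x < b` and `= c - 1` if `x ≥ b`. -/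
theorem stmt10 (s p q l b : ℤ) (S : Finset ℤ)
    (hq : 0 < q) (hqp : q < p) (hcop : IsCoprime p q)
    (hl0 : 0 ≤ l) (hl : l < p)
    (hSsub : ∀ x ∈ S, x ∈ Set.Ico s (s + p))
    (hS : ∀ x : ℤ, x ≠ s →
      (x ∈ S ↔ ∃ j : ℤ, 1 ≤ j ∧ j ≤ l ∧ x = s + lpr (j * q) p))
    (hb : b = if l = 0 then s else s + lpr (l * q) p) :
    ∃ c : ℤ, ∀ x : ℤ, s ≤ x → x + q < s + p →
      (x < b → ((Finset.Ioc x (x + q) ∩ S).card : ℤ) = c) ∧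
      (b ≤ x → ((Finset.Ioc x (x + q) ∩ S).card : ℤ) = c - 1) := by
  have hp : 0 < p := lt_trans hq hqp
  have hpne : p ≠ 0 := by omega
  have hlpr1 : ∀ a : ℤ, 1 ≤ lpr a p ∧ lpr a p ≤ p := by
    intro a
    have h1 := Int.emod_nonneg (a - 1) hpne
    have h2 := Int.emod_lt_of_pos (a - 1) hp
    unfold lpr; omega
  have hlpr2 : ∀ a : ℤ, a - lpr a p = p * ((a - 1) / p) := by
    intro a
    have := Int.mul_ediv_add_emod (a - 1) p
    unfold lpr; omega
  rcases eq_or_lt_of_le hl0 with hl0' | hlpos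
  · -- case l = 0 : S ∩ (x, x+q] is empty
    refine ⟨1, fun x hx1 hx2 => ?_⟩
    have hb' : b = s := by rw [hb, if_pos hl0'.symm]
    have hempty : Finset.Ioc x (x + q) ∩ S = ∅ := by
      ext t
      simp only [Finset.mem_inter, Finset.mem_Ioc, Finset.notMem_empty, iff_false, not_and]
      rintro ⟨ht1, ht2⟩ htS
      have hts : t ≠ s := by omega
      obtain ⟨j, hj1, hj2, _⟩ := (hS t hts).1 htS
      omega
    constructor
    · intro hxb; exact absurd hxb (by omega)
    · intro _; rw [hempty]; simp
  · -- case l ≥ 1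
    set d : ℤ := (l * q - 1) / p with hd
    set e : ℤ := (l * q - 1) % p with he
    have hede : l * q - 1 = p * d + e := by rw [hd, he]; exact (Int.mul_ediv_add_emod _ _).symm
    have he0 : 0 ≤ e := Int.emod_nonneg _ hpne
    have hep : e < p := Int.emod_lt_of_pos _ hp
    have hb' : b = s + e + 1 := by
      rw [hb, if_neg (by omega)]
      unfold lpr
      rw [← he]; ring
    refine ⟨d + 1, fun x hx1 hx2 => ?_⟩
    set y : ℤ := x - s with hy
    have hy0 : 0 ≤ y := by omega
    have hyq : y + q < p := by omega
    set g : ℤ → ℤ := fun j => (j * q - y - 1) / p with hg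
    set φ : ℤ → ℤ := fun j => s + lpr (j * q) p with hφ
    set T : Finset ℤ := (Finset.Icc 1 l).filter (fun j => x < φ j ∧ φ j ≤ x + q) with hT
    -- Step A : the intersection is the image of T under φ
    have himg : Finset.Ioc x (x + q) ∩ S = T.image φ := by
      ext t
      simp only [hT, Finset.mem_inter, Finset.mem_Ioc, Finset.mem_image, Finset.mem_filter,
        Finset.mem_Icc]
      constructor
      · rintro ⟨⟨ht1, ht2⟩, htS⟩
        obtain ⟨j, hj1, hj2, hje⟩ := (hS t (by omega)).1 htS
        exact ⟨j, ⟨⟨hj1, hj2⟩, by rw [hφ]; simp only; omega, by rw [hφ]; simp only; omega⟩,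
          by rw [hφ]; simp only; omega⟩
      · rintro ⟨j, ⟨⟨hj1, hj2⟩, hc1, hc2⟩, rfl⟩
        have h1 := (hlpr1 (j * q)).1
        refine ⟨⟨hc1, hc2⟩, (hS _ ?_).2 ⟨j, hj1, hj2, rfl⟩⟩
        rw [hφ]; simp only; omega
    have hinj : Set.InjOn φ ↑T := by
      intro j hj j' hj' hjj
      simp only [hT, Finset.coe_filter, Set.mem_setOf_eq, Finset.mem_Icc] at hj hj'
      have h1 : lpr (j * q) p = lpr (j' * q) p := by
        have := hjj; rw [hφ] at this; simp only at this; omega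
      have h2 := hlpr2 (j * q)
      have h3 := hlpr2 (j' * q)
      have hdvd : p ∣ (j - j') * q := by
        refine ⟨(j * q - 1) / p - (j' * q - 1) / p, ?_⟩
        have : (j - j') * q = (j * q - lpr (j * q) p) - (j' * q - lpr (j' * q) p) := by
          rw [h1]; ring
        rw [this, h2, h3]; ring
      have hdvd2 : p ∣ (j - j') := hcop.dvd_of_dvd_mul_right hdvd
      have := Int.eq_zero_of_abs_lt_dvd hdvd2 (abs_lt.2 ⟨by omega, by omega⟩)
      omega
    -- Step B : per-element indicator equals telescoping difference
    have hterm : ∀ j ∈ Finset.Icc (1 : ℤ) l,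
        (if x < φ j ∧ φ j ≤ x + q then (1 : ℤ) else 0) = g j - g (j - 1) := by
      intro j _
      set dj : ℤ := (j * q - 1) / p with hdj
      set ej : ℤ := (j * q - 1) % p with hej
      have hjde : j * q - 1 = p * dj + ej := by
        rw [hdj, hej]; exact (Int.mul_ediv_add_emod _ _).symm
      have hej0 : 0 ≤ ej := Int.emod_nonneg _ hpne
      have hejp : ej < p := Int.emod_lt_of_pos _ hp
      have hφj : φ j = s + ej + 1 := by
        rw [hφ]; simp only; unfold lpr; rw [← hej]; ring
      have hgj : g j = if y ≤ ej then dj else dj - 1 := by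
        rw [hg]; simp only
        have hnum : j * q - y - 1 = p * dj + (ej - y) := by omega
        rw [hnum]
        split
        · exact ediv1 dj hp (by omega) (by omega)
        · exact ediv2 dj hp (by omega) (by omega)
      have hgj1 : g (j - 1) = if y + q ≤ ej then dj else dj - 1 := by
        rw [hg]; simp only
        have hnum : (j - 1) * q - y - 1 = p * dj + (ej - q - y) := by
          have : (j - 1) * q - y - 1 = (j * q - 1) - q - y := by ring
          omega
        rw [hnum]
        split
        · exact ediv1 dj hp (by omega) (by omega)
        · exact ediv2 dj hp (by omega) (by omega)
      rw [hφj, hgj, hgj1]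
      rcases le_or_gt (y + q) ej with hcase | hcase
      · rw [if_neg (by omega), if_pos (by omega), if_pos (by omega)]; ring
      · rcases le_or_gt y ej with hcase2 | hcase2
        · rw [if_pos (by omega), if_pos hcase2, if_neg (by omega)]; ring
        · rw [if_neg (by omega), if_neg (by omega), if_neg (by omega)]; ring
    -- Step C : compute the cardinality
    have hcard : ((Finset.Ioc x (x + q) ∩ S).card : ℤ) = g l - g 0 := by
      rw [himg, Finset.card_image_of_injOn hinj, hT, Finset.card_filter]
      push_cast
      rw [Finset.sum_congr rfl hterm]
      have hlnat : ((l.toNat : ℤ)) = l := Int.toNat_of_nonneg hl0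
      calc ∑ j ∈ Finset.Icc (1 : ℤ) l, (g j - g (j - 1))
          = ∑ j ∈ Finset.Icc (1 : ℤ) (l.toNat : ℤ), (g j - g (j - 1)) := by rw [hlnat]
        _ = g l.toNat - g 0 := tele g l.toNat
        _ = g l - g 0 := by rw [hlnat]
    have hg0 : g 0 = -1 := by
      rw [hg]; simp only
      have hnum : (0 : ℤ) * q - y - 1 = p * 0 + (-y - 1) := by ring
      rw [hnum, ediv2 0 hp (by omega) (by omega)]; ring
    have hgl : g l = (p * d + (e - y)) / p := by
      rw [hg]; simp only; congr 1; omega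
    constructor
    · intro hxb
      have hye : y ≤ e := by omega
      have : g l = d := by rw [hgl]; exact ediv1 d hp (by omega) (by omega)
      rw [hcard, this, hg0]; ring
    · intro hxb
      have hye : e + 1 ≤ y := by omega
      have : g l = d - 1 := by rw [hgl]; exact ediv2 d hp (by omega) (by omega)
      rw [hcard, this, hg0]; ring
end

section
/- Let p, q be coprime with 0 < q < p, write p = dq + r with r = [p]_q. Let I = [s, s+p) and J = [y, y+q) ⊂ I, and let f_{I,q}(x) = [x - s + q]_p + s be the cycle map on I, and f_{J,-r}(x) = [x - y - r]_q + y be the cycle map on J. Then for any x ∈ [y, y+q], the first return of x to J under iteration of f_{I,q} equals f_{J,-r}(x). -/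
private lemma iter_formula (s p q x : ℤ) (u : ℕ) (hu : 0 < u) :
    (fun z : ℤ => (z - s + q) % p + s)^[u] x = (x - s + (u : ℤ) * q) % p + s := by
  induction u with
  | zero => omega
  | succ n ih =>
    rcases Nat.eq_zero_or_pos n with h | h
    · subst h; simp
    · rw [Function.iterate_succ_apply', ih h]
      have : (x - s + (n : ℤ) * q) % p + s - s + q = (x - s + (n : ℤ) * q) % p + q := by ring
      rw [this, Int.emod_add_emod]
      push_cast
      ring_nf

/-- First return lemma: for `J = [y, y+q) ⊂ I = [s, s+p)` and `r = [p]_q`,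
the first return of any `x ∈ [y, y+q]` to `J` under iteration of the
cycle-`I`-by-`q` map equals the value of the cycle-`J`-by-`(-r)` map at `x`. -/
theorem stmt12 (s p q r y : ℤ)
    (hq : 0 < q) (hqp : q < p) (hcop : IsCoprime p q)
    (hr : r = p % q)
    (hJl : s ≤ y) (hJr : y + q ≤ s + p) :
    ∀ x : ℤ, y ≤ x → x ≤ y + q →
      ∃ t : ℕ, 0 < t ∧
        (fun z : ℤ => (z - s + q) % p + s)^[t] x = (x - y - r) % q + y ∧
        ∀ u : ℕ, 0 < u → u < t →
          (fun z : ℤ => (z - s + q) % p + s)^[u] x ∉ Set.Ico y (y + q) := by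
  intro x hx1 hx2
  have h0q : (0:ℤ) ≤ q := hq.le
  have hp : q * (p / q) + r = p := by rw [hr]; exact Int.mul_ediv_add_emod p q
  set tZ := (p + y - x + q - 1) / q with htZdef
  have hmod : 0 ≤ (p + y - x + q - 1) % q := Int.emod_nonneg _ (by omega)
  have hmod2 : (p + y - x + q - 1) % q < q := Int.emod_lt_of_pos _ hq
  have hdiv : q * tZ + (p + y - x + q - 1) % q = p + y - x + q - 1 :=
    Int.mul_ediv_add_emod _ _
  have h1 : p + y - x ≤ q * tZ := by omega
  have h2 : q * tZ < p + y - x + q := by omega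
  have hc : tZ * q = q * tZ := mul_comm _ _
  have htZpos : 0 < tZ := by nlinarith
  have htnat : ((tZ.toNat : ℤ)) = tZ := Int.toNat_of_nonneg htZpos.le
  refine ⟨tZ.toNat, by omega, ?_, ?_⟩
  · rw [iter_formula s p q x _ (by omega), htnat]
    have e1 : (x - s + tZ * q) % p = x - s + tZ * q - p := by
      have h' : x - s + tZ * q = (x - s + tZ * q - p) + p * 1 := by ring
      rw [h', Int.add_mul_emod_self_left,
        Int.emod_eq_of_lt (by linarith) (by linarith)]
      ring
    have e2 : (x - y - r) % q = x - y + tZ * q - p := by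
      have h' : x - y - r = (x - y + tZ * q - p) + (p / q - tZ) * q := by
        linear_combination -hp
      rw [h', Int.add_mul_emod_self_right,
        Int.emod_eq_of_lt (by linarith) (by linarith)]
    rw [e1, e2]; ring
  · intro u hu hut
    rw [iter_formula s p q x u hu]
    have huZ1 : (1:ℤ) ≤ (u:ℤ) := by exact_mod_cast hu
    have huZ2 : (u:ℤ) ≤ tZ - 1 := by
      have : (u:ℤ) < tZ := by rw [← htnat]; exact_mod_cast hut
      omega
    have hql : q ≤ (u:ℤ) * q := le_mul_of_one_le_left h0q huZ1
    have hqu : (u:ℤ) * q ≤ (tZ - 1) * q := mul_le_mul_of_nonneg_right huZ2 h0q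
    have hexp : (tZ - 1) * q = tZ * q - q := by ring
    simp only [Set.mem_Ico, not_and, not_lt]
    intro hy
    rcases lt_or_ge (x - s + (u:ℤ) * q) p with h | h
    · have e : (x - s + (u:ℤ) * q) % p = x - s + (u:ℤ) * q :=
        Int.emod_eq_of_lt (by linarith) h
      rw [e]; linarith
    · have e : (x - s + (u:ℤ) * q) % p = x - s + (u:ℤ) * q - p := by
        have h' : x - s + (u:ℤ) * q = (x - s + (u:ℤ) * q - p) + p * 1 := by ring
        rw [h', Int.add_mul_emod_self_left,
          Int.emod_eq_of_lt (by linarith) (by linarith)]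
        ring
      rw [e] at hy ⊢
      exfalso
      linarith
end

section
/- Let S be an affine progression in I = [s, s+p) with difference q > 0, break point b, and let g be an S-jump function with parameters θ, t where θ ∤ q. If g attains its global minimum in I, then the set of minimizers of g in I is contained in one of the intervals [s, s+q), [b, b+q), or [s+p-q, s+p). -/
def IsAffProg (S : Set ℤ) (s w d l : ℤ) : Prop :=
  S ⊆ Set.Ico s (s + w) ∧
    S \ {s} = {x : ℤ | ∃ j : ℤ, 1 ≤ j ∧ j ≤ l ∧ x = s + lpr (j * d) w}

lemma int_small_dvd {w d : ℤ} (h : w ∣ d) (h1 : -w < d) (h2 : d < w) : d = 0 :=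
  Int.eq_zero_of_abs_lt_dvd h (abs_lt.mpr ⟨h1, h2⟩)

lemma lpr_pos {a w : ℤ} (hw : 0 < w) : 1 ≤ lpr a w := by
  have := Int.emod_nonneg (a - 1) (by omega : w ≠ 0); unfold lpr; omega

lemma lpr_le {a w : ℤ} (hw : 0 < w) : lpr a w ≤ w := by
  have := Int.emod_lt_of_pos (a - 1) hw; unfold lpr; omega

lemma lpr_dvd (a w : ℤ) : w ∣ lpr a w - a := by
  have h : (a - 1) % w = a - 1 - w * ((a - 1) / w) := by rw [Int.emod_def]
  exact ⟨-((a - 1) / w), by unfold lpr; rw [h]; ring⟩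

lemma lpr_unique {a w x : ℤ} (hw : 0 < w) (h1 : 1 ≤ x) (h2 : x ≤ w)
    (hd : w ∣ x - a) : lpr a w = x := by
  have h3 := lpr_pos (a := a) hw
  have h4 := lpr_le (a := a) hw
  have h5 : w ∣ lpr a w - x := by
    have := (lpr_dvd a w).sub hd
    simpa using this
  have := int_small_dvd h5 (by omega) (by omega)
  omega

/-- For an affine progression `S` in `I = [s, s+p)` of positive difference `q`
and break point `b`, and an `S`-jump function `g` with parameters `θ ∤ q`
attaining its global minimum in `I`, the minimizers of `g` in `I` are
contained in one of `[s, s+q)`, `[b, b+q)`, `[s+p-q, s+p)`. -/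
theorem stmt15 (s p q l b t θ : ℤ) (S : Set ℤ) (g : ℤ → ℤ)
    (hq : 0 < q) (hqp : q < p) (hcop : IsCoprime p q)
    (hl0 : 0 ≤ l) (hl : l < p)
    (ht : 0 < t) (htθ : t < θ) (hcopt : IsCoprime t θ) (hndvd : ¬ θ ∣ q)
    (hS : IsAffProg S s p q l)
    (hb : b = if l = 0 then s else s + lpr (l * q) p)
    (hjump : ∀ x : ℤ, g x - g (x - 1) = t ∨ g x - g (x - 1) = t - θ)
    (hjumpS : ∀ x : ℤ, s ≤ x → x < s + p →
      (x ∈ S → g x - g (x - 1) = t - θ) ∧ (x ∉ S → g x - g (x - 1) = t))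
    (hmin : ∃ x ∈ Set.Ico s (s + p), ∀ y : ℤ, g x ≤ g y) :
    {x : ℤ | x ∈ Set.Ico s (s + p) ∧ ∀ y : ℤ, g x ≤ g y} ⊆ Set.Ico s (s + q) ∨
    {x : ℤ | x ∈ Set.Ico s (s + p) ∧ ∀ y : ℤ, g x ≤ g y} ⊆ Set.Ico b (b + q) ∨
    {x : ℤ | x ∈ Set.Ico s (s + p) ∧ ∀ y : ℤ, g x ≤ g y} ⊆
      Set.Ico (s + p - q) (s + p) := by
  classical
  have hp : 0 < p := hq.trans hqp
  set r : ℤ → ℤ := fun j => lpr (j * q) p with hrdef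
  have hr1 : ∀ j, 1 ≤ r j := fun j => lpr_pos hp
  have hr2 : ∀ j, r j ≤ p := fun j => lpr_le hp
  have hrdvd : ∀ j, p ∣ r j - j * q := fun j => lpr_dvd _ _
  have hr0 : r 0 = p := lpr_unique hp (by omega) le_rfl ⟨1, by ring⟩
  have hshift : ∀ (v : ℤ) (j : ℤ), 1 ≤ v → v ≤ p - q →
      (r (j + 1) = v + q ↔ r j = v) := by
    intro v j hv1 hv2
    constructor
    · intro h
      apply lpr_unique hp (by omega) (by omega)
      have h1 := hrdvd (j + 1)
      rw [h] at h1
      obtain ⟨k, hk⟩ := h1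
      exact ⟨k, by linarith [hk]⟩
    · intro h
      apply lpr_unique hp (by omega) (by omega)
      have h1 := hrdvd j
      rw [h] at h1
      obtain ⟨k, hk⟩ := h1
      exact ⟨k, by linarith [hk]⟩
  have hinj : ∀ i j : ℤ, 0 ≤ i → i ≤ l → 0 ≤ j → j ≤ l → r i = r j → i = j := by
    intro i j hi0 hi1 hj0 hj1 h
    have h1 := hrdvd i
    have h2 := hrdvd j
    rw [h] at h1
    have h3 : p ∣ (j - i) * q := by
      have := h2.sub h1
      have e : r j - j * q - (r j - i * q) = -((j - i) * q) := by ring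
      rw [e] at this
      exact (dvd_neg.mp this)
    have h4 : p ∣ j - i := hcop.dvd_of_dvd_mul_right h3
    have := int_small_dvd h4 (by omega) (by omega)
    omega
  obtain ⟨hSsub, hSset⟩ := hS
  have hmemS : ∀ y : ℤ, s < y → (y ∈ S ↔ ∃ j : ℤ, 1 ≤ j ∧ j ≤ l ∧ y = s + r j) := by
    intro y hy
    constructor
    · intro h
      have h2 : y ∈ S \ {s} := ⟨h, by simp; omega⟩
      rw [hSset] at h2
      exact h2
    · intro h
      have h2 : y ∈ S \ {s} := by rw [hSset]; exact h
      exact h2.1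
  set L := l.toNat with hLdef
  have hLcast : (L : ℤ) = l := Int.toNat_of_nonneg hl0
  set f : ℤ → ℤ := fun v =>
    ∑ i ∈ Finset.range L, if v < r ((i : ℤ) + 1) ∧ r ((i : ℤ) + 1) ≤ v + q then (1 : ℤ) else 0
    with hfdef
  have hfv : ∀ v : ℤ, f v =
      ∑ i ∈ Finset.range L, if v < r ((i : ℤ) + 1) ∧ r ((i : ℤ) + 1) ≤ v + q then (1 : ℤ) else 0 :=
    fun v => rfl
  set n := q.toNat with hndef
  have hncast : (n : ℤ) = q := Int.toNat_of_nonneg (by omega)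
  -- counting lemma
  have hcount : ∀ x : ℤ, s ≤ x → x + q < s + p →
      (∑ i ∈ Finset.range n, if x + (i : ℤ) + 1 ∈ S then (1 : ℤ) else 0) = f (x - s) := by
    intro x hx1 hx2
    rw [hfv]
    rw [Finset.sum_boole, Finset.sum_boole]
    congr 1
    symm
    apply Finset.card_bij
      (i := fun (j : ℕ) (hj : j ∈ (Finset.range L).filter
        (fun (i : ℕ) => x - s < r ((i:ℤ)+1) ∧ r ((i:ℤ)+1) ≤ x - s + q)) => (r ((j:ℤ)+1) - (x - s) - 1).toNat)
    · intro a ha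
      simp only [Finset.mem_filter, Finset.mem_range] at ha ⊢
      obtain ⟨haL, hlt, hle⟩ := ha
      constructor
      · omega
      · have hmem : x + ((r ((a:ℤ)+1) - (x - s) - 1).toNat : ℤ) + 1 = s + r ((a:ℤ)+1) := by omega
        rw [hmem]
        have h2 : s + r ((a:ℤ)+1) ∈ S \ {s} := by
          rw [hSset]; exact ⟨(a:ℤ)+1, by omega, by omega, rfl⟩
        exact h2.1
    · intro a1 ha1 a2 ha2 hEq
      simp only [Finset.mem_filter, Finset.mem_range] at ha1 ha2
      have h1 := hr1 ((a1:ℤ)+1)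
      have h2 := hr1 ((a2:ℤ)+1)
      have h3 : r ((a1:ℤ)+1) = r ((a2:ℤ)+1) := by omega
      have := hinj ((a1:ℤ)+1) ((a2:ℤ)+1) (by omega) (by omega) (by omega) (by omega) h3
      omega
    · intro i hi
      simp only [Finset.mem_filter, Finset.mem_range] at hi
      obtain ⟨hin, hiS⟩ := hi
      have hin' : (i:ℤ) < q := by omega
      obtain ⟨j, hj1, hj2, hj3⟩ := (hmemS (x + (i:ℤ) + 1) (by omega)).mp hiS
      have hjr1 := hr1 j
      have hjr2 := hr2 j
      refine ⟨(j - 1).toNat, ?_, ?_⟩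
      · simp only [Finset.mem_filter, Finset.mem_range]
        have hjcast : ((j-1).toNat : ℤ) + 1 = j := by omega
        rw [hjcast]
        refine ⟨by omega, by omega, by omega⟩
      · have hjcast : ((j-1).toNat : ℤ) + 1 = j := by omega
        rw [hjcast]
        omega
  -- step lemma
  have hstep : ∀ v : ℤ, 1 ≤ v → v ≤ p - q →
      f v - f (v - 1) = -(if r l = v then 1 else 0) := by
    intro v hv1 hv2
    have hpt : f v - f (v - 1) =
        ∑ i ∈ Finset.range L, ((if r (i:ℤ) = v then (1:ℤ) else 0)
          - (if r ((i:ℤ)+1) = v then (1:ℤ) else 0)) := by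
      rw [hfv, hfv, ← Finset.sum_sub_distrib]
      apply Finset.sum_congr rfl
      intro i _
      have hiff := hshift v (i:ℤ) hv1 hv2
      have hb1 := hr1 ((i:ℤ)+1)
      split_ifs <;> omega
    have hts := Finset.sum_range_sub' (fun i : ℕ => if r (i:ℤ) = v then (1:ℤ) else 0) L
    push_cast at hts
    rw [hpt, hts]
    simp only [hr0, hLcast]
    rw [if_neg (by omega : ¬ (p = v))]
    ring
  -- constancy
  have hconstN : ∀ m : ℕ, (m : ℤ) ≤ p - q →
      f m = f 0 - (if r l ≤ (m:ℤ) then 1 else 0) := by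
    intro m
    induction m with
    | zero =>
      intro _
      have := hr1 l
      simp only [Nat.cast_zero]
      rw [if_neg (by omega)]
      ring
    | succ k ih =>
      intro h
      have hcast : ((k+1 : ℕ) : ℤ) = (k:ℤ) + 1 := by push_cast; ring
      rw [hcast] at h ⊢
      have hk : (k : ℤ) ≤ p - q := by omega
      have hstep' := hstep ((k:ℤ)+1) (by omega) h
      have ih' := ih hk
      have e : ((k:ℤ)+1) - 1 = (k:ℤ) := by ring
      rw [e, ih'] at hstep'
      have := hr1 l
      split_ifs at hstep' ⊢ <;> omega
  have hconst : ∀ v : ℤ, 0 ≤ v → v ≤ p - q →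
      f v = f 0 - (if r l ≤ v then 1 else 0) := by
    intro v hv0 hv1
    have := hconstN v.toNat (by omega)
    rwa [Int.toNat_of_nonneg hv0] at this
  -- difference formula
  obtain ⟨c, hΔ⟩ : ∃ c : ℤ, ∀ x : ℤ, s ≤ x → x + q < s + p →
      g (x + q) - g x = q * t - θ * (c - (if b ≤ x then 1 else 0)) := by
    refine ⟨f 0 + (if l = 0 then 1 else 0), ?_⟩
    intro x hx1 hx2
    have hterm : ∀ i ∈ Finset.range n, g (x + ((i:ℤ) + 1)) - g (x + (i:ℤ))
        = t - θ * (if x + (i:ℤ) + 1 ∈ S then (1:ℤ) else 0) := by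
      intro i hi
      simp only [Finset.mem_range] at hi
      have hi' : (i:ℤ) < q := by omega
      have hj := hjumpS (x + (i:ℤ) + 1) (by omega) (by omega)
      have e : x + (i:ℤ) + 1 - 1 = x + (i:ℤ) := by ring
      rw [e] at hj
      have e2 : x + ((i:ℤ) + 1) = x + (i:ℤ) + 1 := by ring
      rw [e2]
      by_cases hmem : x + (i:ℤ) + 1 ∈ S
      · rw [if_pos hmem, hj.1 hmem]; ring
      · rw [if_neg hmem, hj.2 hmem]; ring
    have htele : g (x + q) - g x =
        ∑ i ∈ Finset.range n, (g (x + ((i:ℤ) + 1)) - g (x + (i:ℤ))) := by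
      have h := Finset.sum_range_sub (fun i : ℕ => g (x + (i:ℤ))) n
      push_cast at h
      rw [hncast] at h
      simpa using h.symm
    rw [htele, Finset.sum_congr rfl hterm, Finset.sum_sub_distrib,
      Finset.sum_const, ← Finset.mul_sum, hcount x hx1 hx2]
    have hfval := hconst (x - s) (by omega) (by omega)
    rw [hfval]
    by_cases hl' : l = 0
    · have hbs : b = s := by rw [hb, if_pos hl']
      have hrl : r l = p := by rw [hl']; exact hr0
      rw [hrl, if_neg (by omega : ¬ p ≤ x - s), if_pos (by omega : b ≤ x), if_pos hl',
        nsmul_eq_mul, Finset.card_range, hncast]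
      ring
    · have hbs : b = s + r l := by rw [hb, if_neg hl']
      have hieq : (if r l ≤ x - s then (1:ℤ) else 0) = (if b ≤ x then 1 else 0) := by
        split_ifs <;> omega
      rw [hieq, if_neg hl', nsmul_eq_mul, Finset.card_range, hncast]
      ring
  -- nonvanishing
  have hnz : ∀ d : ℤ, q * t - θ * d ≠ 0 := by
    intro d h
    apply hndvd
    have hdvd : θ ∣ q * t := ⟨d, by linarith⟩
    exact hcopt.symm.dvd_of_dvd_mul_right hdvd
  have hbge : s ≤ b := by
    rw [hb]; split_ifs with h
    · exact le_rfl
    · have h1 : 1 ≤ lpr (l * q) p := lpr_pos hp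
      omega
  -- endgame
  by_cases hA : {x : ℤ | x ∈ Set.Ico s (s + p) ∧ ∀ y : ℤ, g x ≤ g y} ⊆
      Set.Ico (s + p - q) (s + p)
  · right; right; exact hA
  obtain ⟨x, hxM, hxN⟩ := Set.not_subset.mp hA
  have hxI : x ∈ Set.Ico s (s + p) := hxM.1
  simp only [Set.mem_Ico] at hxI
  simp only [Set.mem_Ico, not_and, not_lt] at hxN
  have hxlt : x + q < s + p := by omega
  have hΔx := hΔ x hxI.1 hxlt
  have hΔxpos : 0 < q * t - θ * (c - (if b ≤ x then 1 else 0)) := by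
    refine lt_of_le_of_ne ?_ (Ne.symm (hnz _))
    rw [← hΔx]
    linarith [hxM.2 (x + q)]
  by_cases hB : {x : ℤ | x ∈ Set.Ico s (s + p) ∧ ∀ y : ℤ, g x ≤ g y} ⊆ Set.Ico s (s + q)
  · left; exact hB
  obtain ⟨y, hyM, hyN⟩ := Set.not_subset.mp hB
  have hyI : y ∈ Set.Ico s (s + p) := hyM.1
  simp only [Set.mem_Ico] at hyI
  simp only [Set.mem_Ico, not_and, not_lt] at hyN
  have hyge : s + q ≤ y := by omega
  have hΔy := hΔ (y - q) (by omega) (by omega)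
  rw [show y - q + q = y from by ring] at hΔy
  have hΔyneg : q * t - θ * (c - (if b ≤ y - q then 1 else 0)) < 0 := by
    refine lt_of_le_of_ne ?_ (hnz _)
    rw [← hΔy]
    linarith [hyM.2 (y - q)]
  -- determine the pattern
  have hkey : 0 < q * t - θ * (c - 1) ∧ q * t - θ * c < 0 := by
    constructor
    · by_cases h1 : b ≤ x
      · rw [if_pos h1] at hΔxpos; linarith
      · rw [if_neg h1, sub_zero] at hΔxpos
        by_cases h2 : b ≤ y - q
        · rw [if_pos h2] at hΔyneg; linarith
        · rw [if_neg h2, sub_zero] at hΔyneg; linarith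
    · by_cases h2 : b ≤ y - q
      · rw [if_pos h2] at hΔyneg
        by_cases h1 : b ≤ x
        · rw [if_pos h1] at hΔxpos; linarith
        · rw [if_neg h1, sub_zero] at hΔxpos; linarith
      · rw [if_neg h2, sub_zero] at hΔyneg; linarith
  have hbx : b ≤ x := by
    by_contra h
    rw [if_neg h, sub_zero] at hΔxpos
    linarith [hkey.2]
  right; left
  intro z hzM
  have hzI : z ∈ Set.Ico s (s + p) := hzM.1
  simp only [Set.mem_Ico] at hzI
  simp only [Set.mem_Ico]
  constructor
  · by_contra hzb
    push_neg at hzb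
    have hzlt : z + q < s + p := by omega
    have hΔz := hΔ z hzI.1 hzlt
    rw [if_neg (by omega), sub_zero] at hΔz
    have := hzM.2 (z + q)
    linarith [hkey.2]
  · by_contra hzb
    push_neg at hzb
    have hΔz := hΔ (z - q) (by omega) (by omega)
    rw [show z - q + q = z from by ring] at hΔz
    rw [if_pos (by omega)] at hΔz
    have := hzM.2 (z - q)
    linarith [hkey.1]
end

section
/- Let p = θb and r = θc where θ, b, c are positive integers, and suppose p and q are coprime with (-1)^i θc = p_i q - p q_i and θb = θc·p_{i-1} + p_i·r_{i-1} for continued fraction data of p/q, where θ | p_i. Then b = c·p_{i-1} + (p_i/θ)·r_{i-1} ≥ 1 + r_{i-1} ≥ 2 + θc ≥ 2 + θ, hence p ≥ θ(θ+2). -/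
/-- Arithmetic core of the order bound: if `p = θb`, `rᵢ = θc`,
`(-1)^i θc = pᵢ q - p qᵢ`, `θb = θc·p_{i-1} + pᵢ·r_{i-1}`, `θ ∣ pᵢ`,
`p_{i-1} ≥ 1`, `pᵢ/θ ≥ 1`, `r_{i-1} > θc`, then
`b = c·p_{i-1} + (pᵢ/θ)·r_{i-1} ≥ 1 + r_{i-1} ≥ 2 + θc ≥ 2 + θ`, hence
`p ≥ θ(θ+2)`. -/
theorem stmt16 (p q θ b c i : ℕ) (pi qi pim rim : ℤ)
    (hθ : 1 < θ) (hb : 0 < b) (hc : 0 < c)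
    (hp : (p : ℤ) = (θ : ℤ) * b)
    (hcop : Nat.Coprime p q)
    (h1 : (-1 : ℤ) ^ i * ((θ : ℤ) * c) = pi * (q : ℤ) - (p : ℤ) * qi)
    (h2 : (θ : ℤ) * b = (θ : ℤ) * c * pim + pi * rim)
    (hdvd : (θ : ℤ) ∣ pi)
    (hpim : 1 ≤ pim) (hpi : (θ : ℤ) ≤ pi)
    (hrim : (θ : ℤ) * c < rim) :
    (b : ℤ) = (c : ℤ) * pim + (pi / (θ : ℤ)) * rim ∧
    1 + rim ≤ (b : ℤ) ∧ 2 + (θ : ℤ) * c ≤ (b : ℤ) ∧ 2 + (θ : ℤ) ≤ (b : ℤ) ∧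
    (θ : ℤ) * ((θ : ℤ) + 2) ≤ (p : ℤ) := by
  obtain ⟨d, hd⟩ := hdvd
  have hθ0 : (0 : ℤ) < (θ : ℤ) := by exact_mod_cast Nat.lt_of_lt_of_le Nat.zero_lt_one hθ.le
  have hθ1 : (1 : ℤ) < (θ : ℤ) := by exact_mod_cast hθ
  have hθne : (θ : ℤ) ≠ 0 := ne_of_gt hθ0
  have hdiv : pi / (θ : ℤ) = d := by rw [hd, Int.mul_ediv_cancel_left _ hθne]
  have hd1 : 1 ≤ d := by nlinarith [hpi, hd]
  have hc1 : (1 : ℤ) ≤ (c : ℤ) := by exact_mod_cast hc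
  have heq : (b : ℤ) = (c : ℤ) * pim + d * rim := by
    have : (θ : ℤ) * b = (θ : ℤ) * ((c : ℤ) * pim + d * rim) := by
      rw [h2, hd]; ring
    exact mul_left_cancel₀ hθne this
  have hrim0 : 0 < rim := lt_trans (by positivity) hrim
  have hb1 : 1 + rim ≤ (b : ℤ) := by nlinarith
  have hb2 : 2 + (θ : ℤ) * c ≤ (b : ℤ) := by linarith
  have hb3 : 2 + (θ : ℤ) ≤ (b : ℤ) := by nlinarith
  exact ⟨by rw [hdiv]; exact heq, hb1, hb2, hb3, by nlinarith⟩
end
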